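/- arXiv:2208.02903 — 2 statements merged into one kernel-verified Lean document; each statement's English description precedes it below -/
import Mathlib

section
/- Every measurable ℍ-independent subset of {0,1}^ℕ has measure zero with respect to the uniform product measure; consequently {0,1}^ℕ cannot be partitioned into countably many measurable ℍ-independent sets. -/
/-- The infinite-dimensional hypercube graph on `{0,1}^ℕ`:
two bit strings are adjacent iff they differ in exactly one coordinate. -/
def hypercube : SimpleGraph (ℕ → Bool) where
  Adj x y := ∃! n, x n ≠ y n
  symm := by
    constructor
    rintro x y ⟨n, hn, hu⟩
    exact ⟨n, hn.symm, fun m hm => hu m hm.symm⟩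
  loopless := by
    constructor
    rintro x ⟨n, hn, -⟩
    exact hn rfl

open MeasureTheory

open scoped symmDiff

/-- A set of vertices is independent in the hypercube graph if no edge joins two of its
members. -/
def HIndependent (I : Set (ℕ → Bool)) : Prop :=
  ∀ x ∈ I, ∀ y ∈ I, ¬ hypercube.Adj x y

/- Auxiliary definitions and lemmas -/

/-- Cylinder set: first `n` coordinates agree with `a`. -/
def cyl (n : ℕ) (a : ℕ → Bool) : Set (ℕ → Bool) := {x | ∀ i < n, x i = a i}

def cylSet : Set (Set (ℕ → Bool)) := {S | ∃ n a, S = cyl n a}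

lemma measurableSet_cyl (n : ℕ) (a : ℕ → Bool) : MeasurableSet (cyl n a) := by
  have h : cyl n a = ⋂ i, ⋂ _ : i < n, (fun x : ℕ → Bool => x i) ⁻¹' {a i} := by
    ext x; simp [cyl]
  rw [h]
  exact MeasurableSet.iInter fun i => MeasurableSet.iInter fun _ =>
    (measurable_pi_apply i) (measurableSet_singleton _)

/-- Flip the `n`-th coordinate. -/
def flipc (n : ℕ) (x : ℕ → Bool) : ℕ → Bool := fun i => if i = n then !(x i) else x i

lemma measurable_flipc (n : ℕ) : Measurable (flipc n) := by
  refine measurable_pi_lambda _ fun i => ?_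
  by_cases h : i = n <;> simp only [flipc, h, if_true, if_false, reduceIte]
  · exact Measurable.comp (g := fun b : Bool => !b) .of_discrete (measurable_pi_apply _)
  · exact measurable_pi_apply i

lemma flipc_apply_ne (n i : ℕ) (x : ℕ → Bool) (h : i ≠ n) : flipc n x i = x i := by
  simp [flipc, h]

lemma flipc_apply_self (n : ℕ) (x : ℕ → Bool) : flipc n x n = !(x n) := by
  simp [flipc]

lemma flipc_preimage_cyl (n m : ℕ) (a : ℕ → Bool) :
    flipc n ⁻¹' cyl m a = cyl m (flipc n a) := by
  ext x
  simp only [Set.mem_preimage, cyl, Set.mem_setOf_eq]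
  refine forall₂_congr fun i hi => ?_
  by_cases h : i = n
  · subst h
    cases hx : x i <;> cases ha : a i <;> simp [flipc, hx, ha]
  · simp [flipc, h]

lemma cyl_flipc_self (n : ℕ) (a : ℕ → Bool) : cyl n (flipc n a) = cyl n a := by
  ext x
  refine forall₂_congr fun i hi => ?_
  rw [flipc_apply_ne n i a (Nat.ne_of_lt hi)]

/-- The coordinate sets belong to the σ-algebra generated by cylinders. -/
lemma coord_mem_gen (i : ℕ) (b : Bool) :
    MeasurableSet[MeasurableSpace.generateFrom cylSet] {x : ℕ → Bool | x i = b} := by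
  have h : {x : ℕ → Bool | x i = b}
      = ⋃ s : Fin i → Bool, cyl (i + 1) (fun j => if h : j < i then s ⟨j, h⟩ else b) := by
    ext x
    simp only [Set.mem_setOf_eq, Set.mem_iUnion]
    constructor
    · intro hx
      refine ⟨fun j => x j, fun j hj => ?_⟩
      rcases Nat.lt_or_ge j i with h' | h'
      · simp [h']
      · have : j = i := le_antisymm (Nat.lt_succ_iff.mp hj) h'
        subst this
        simp [hx, Nat.lt_irrefl]
    · rintro ⟨s, hs⟩
      have := hs i (Nat.lt_succ_self i)
      simpa [Nat.lt_irrefl] using this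
  rw [h]
  exact MeasurableSet.iUnion fun s =>
    MeasurableSpace.measurableSet_generateFrom ⟨_, _, rfl⟩

lemma pi_eq_generateFrom_cylSet :
    (inferInstance : MeasurableSpace (ℕ → Bool)) = MeasurableSpace.generateFrom cylSet := by
  refine le_antisymm ?_ (MeasurableSpace.generateFrom_le ?_)
  · show MeasurableSpace.pi ≤ MeasurableSpace.generateFrom cylSet
    refine iSup_le fun i => ?_
    rintro s ⟨t, -, rfl⟩
    have h : (fun x : ℕ → Bool => x i) ⁻¹' t = ⋃ b ∈ t, {x : ℕ → Bool | x i = b} := by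
      ext x; simp
    rw [h]
    exact MeasurableSet.biUnion (Set.to_countable t) fun b _ => coord_mem_gen i b
  · rintro S ⟨n, a, rfl⟩
    exact measurableSet_cyl n a

lemma isPiSystem_cylSet : IsPiSystem cylSet := by
  rintro S ⟨n, a, rfl⟩ T ⟨m, b, rfl⟩ hne
  rcases hne with ⟨x, hxa, hxb⟩
  rcases le_total n m with h | h
  · refine ⟨m, b, ?_⟩
    apply Set.eq_of_subset_of_subset (Set.inter_subset_right)
    intro y hy
    refine ⟨fun i hi => ?_, hy⟩
    rw [hy i (lt_of_lt_of_le hi h), ← hxb i (lt_of_lt_of_le hi h), hxa i hi]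
  · refine ⟨n, a, ?_⟩
    apply Set.eq_of_subset_of_subset (Set.inter_subset_left)
    intro y hy
    refine ⟨hy, fun i hi => ?_⟩
    rw [hy i (lt_of_lt_of_le hi h), ← hxa i (lt_of_lt_of_le hi h), hxb i hi]

/-- The algebra of sets determined by finitely many coordinates. -/
def finDet : Set (Set (ℕ → Bool)) :=
  {A | MeasurableSet A ∧ ∃ n, ∀ x y : ℕ → Bool, (∀ i < n, x i = y i) → x ∈ A → y ∈ A}

lemma isSetAlgebra_finDet : IsSetAlgebra finDet where
  empty_mem := ⟨MeasurableSet.empty, 0, fun _ _ _ h => h⟩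
  compl_mem := by
    rintro A ⟨mA, n, hA⟩
    exact ⟨mA.compl, n, fun x y hxy hx hy =>
      hx (hA y x (fun i hi => (hxy i hi).symm) hy)⟩
  union_mem := by
    rintro A B ⟨mA, n, hA⟩ ⟨mB, m, hB⟩
    refine ⟨mA.union mB, max n m, fun x y hxy hx => ?_⟩
    rcases hx with hx | hx
    · exact Or.inl (hA x y (fun i hi => hxy i (lt_of_lt_of_le hi (le_max_left n m))) hx)
    · exact Or.inr (hB x y (fun i hi => hxy i (lt_of_lt_of_le hi (le_max_right n m))) hx)

lemma cyl_mem_finDet (n : ℕ) (a : ℕ → Bool) : cyl n a ∈ finDet :=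
  ⟨measurableSet_cyl n a, n, fun x y hxy hx i hi => by rw [← hxy i hi, hx i hi]⟩

lemma pi_eq_generateFrom_finDet :
    (inferInstance : MeasurableSpace (ℕ → Bool)) = MeasurableSpace.generateFrom finDet := by
  refine le_antisymm ?_ (MeasurableSpace.generateFrom_le fun A hA => hA.1)
  rw [pi_eq_generateFrom_cylSet]
  refine MeasurableSpace.generateFrom_le ?_
  rintro S ⟨n, a, rfl⟩
  exact MeasurableSpace.measurableSet_generateFrom (cyl_mem_finDet n a)

/-- Extend a finite bit string by `false`. -/
def extb (n : ℕ) (s : Fin n → Bool) : ℕ → Bool := fun i => if h : i < n then s ⟨i, h⟩ else false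

lemma iUnion_cyl_extb (n : ℕ) : (⋃ s : Fin n → Bool, cyl n (extb n s)) = Set.univ := by
  refine Set.eq_univ_of_forall fun x => ?_
  refine Set.mem_iUnion.mpr ⟨fun j => x j, fun i hi => ?_⟩
  simp [extb, hi]

lemma pairwise_disjoint_cyl_extb (n : ℕ) :
    Pairwise (Function.onFun Disjoint fun s : Fin n → Bool => cyl n (extb n s)) := by
  intro s t hst
  rw [Function.onFun, Set.disjoint_left]
  intro x hxs hxt
  apply hst
  funext j
  have h1 := hxs j j.2
  have h2 := hxt j j.2
  simp only [extb, j.2, dif_pos] at h1 h2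
  rw [← h1, ← h2]

/-- With respect to the uniform product measure (coordinates are i.i.d. fair bits), every
measurable hypercube-independent set is null; consequently `{0,1}^ℕ` is not a countable
union of measurable independent sets. -/
theorem hypercube_measurable_independent_null (μ : Measure (ℕ → Bool))
    [IsProbabilityMeasure μ]
    (hμ : ∀ (n : ℕ) (a : ℕ → Bool), μ {x | ∀ i < n, x i = a i} = (1 / 2 : ENNReal) ^ n) :
    (∀ I : Set (ℕ → Bool), MeasurableSet I → HIndependent I → μ I = 0) ∧
      ¬ ∃ f : ℕ → Set (ℕ → Bool),
          (∀ n, MeasurableSet (f n) ∧ HIndependent (f n)) ∧ (⋃ n, f n) = Set.univ := by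
  have hcyl : ∀ (n : ℕ) (a : ℕ → Bool), μ (cyl n a) = (1 / 2 : ENNReal) ^ n := hμ
  -- flips preserve μ
  have hflip : ∀ n : ℕ, μ.map (flipc n) = μ := by
    intro n
    haveI : IsProbabilityMeasure (μ.map (flipc n)) :=
      Measure.isProbabilityMeasure_map (measurable_flipc n).aemeasurable
    refine ext_of_generate_finite cylSet pi_eq_generateFrom_cylSet isPiSystem_cylSet ?_ (by simp)
    rintro S ⟨m, a, rfl⟩
    rw [Measure.map_apply (measurable_flipc n) (measurableSet_cyl m a),
      flipc_preimage_cyl, hcyl, hcyl]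
  have hflip_pre : ∀ (n : ℕ) (S : Set (ℕ → Bool)), MeasurableSet S →
      μ (flipc n ⁻¹' S) = μ S := by
    intro n S hS
    conv_rhs => rw [← hflip n]
    rw [Measure.map_apply (measurable_flipc n) hS]
  have main : ∀ I : Set (ℕ → Bool), MeasurableSet I → HIndependent I → μ I = 0 := by
    intro I mI hI
    -- Lemma A : on any cylinder of depth n, I fills at most half
    have lemA : ∀ (n : ℕ) (a : ℕ → Bool), 2 * μ (I ∩ cyl n a) ≤ μ (cyl n a) := by
      intro n a
      have hdisj : Disjoint (I ∩ cyl n a) (flipc n ⁻¹' (I ∩ cyl n a)) := by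
        rw [Set.disjoint_left]
        rintro x ⟨hxI, -⟩ ⟨hfI, -⟩
        refine hI x hxI (flipc n x) hfI ⟨n, ?_, ?_⟩
        · show x n ≠ flipc n x n
          rw [flipc_apply_self]
          cases x n <;> simp
        · intro m hm
          by_contra hmn
          exact hm (flipc_apply_ne n m x hmn).symm
      have hsub : (I ∩ cyl n a) ∪ flipc n ⁻¹' (I ∩ cyl n a) ⊆ cyl n a := by
        rintro x (⟨-, hx⟩ | hx)
        · exact hx
        · have : x ∈ flipc n ⁻¹' cyl n a := hx.2
          rw [flipc_preimage_cyl, cyl_flipc_self] at this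
          exact this
      have hmeq : μ (flipc n ⁻¹' (I ∩ cyl n a)) = μ (I ∩ cyl n a) :=
        hflip_pre n _ (mI.inter (measurableSet_cyl n a))
      calc 2 * μ (I ∩ cyl n a)
          = μ (I ∩ cyl n a) + μ (flipc n ⁻¹' (I ∩ cyl n a)) := by rw [hmeq, two_mul]
        _ = μ ((I ∩ cyl n a) ∪ flipc n ⁻¹' (I ∩ cyl n a)) :=
            (measure_union hdisj ((measurable_flipc n) (mI.inter (measurableSet_cyl n a)))).symm
        _ ≤ μ (cyl n a) := measure_mono hsub
    -- Lemma B : same for any finitely determined set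
    have lemB : ∀ A ∈ finDet, 2 * μ (A ∩ I) ≤ μ A := by
      rintro A ⟨mA, n, hdet⟩
      have hsum : ∀ S : Set (ℕ → Bool), MeasurableSet S →
          μ S = ∑' s : Fin n → Bool, μ (cyl n (extb n s) ∩ S) := by
        intro S hS
        have h1 : S = ⋃ s : Fin n → Bool, cyl n (extb n s) ∩ S := by
          rw [← Set.iUnion_inter, iUnion_cyl_extb, Set.univ_inter]
        conv_lhs => rw [h1]
        exact measure_iUnion
          (fun s t hst => (pairwise_disjoint_cyl_extb n hst).mono
            Set.inter_subset_left Set.inter_subset_left)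
          (fun s => (measurableSet_cyl n (extb n s)).inter hS)
      have hterm : ∀ s : Fin n → Bool,
          2 * μ (cyl n (extb n s) ∩ (A ∩ I)) ≤ μ (cyl n (extb n s) ∩ A) := by
        intro s
        by_cases hc : ∃ x ∈ cyl n (extb n s), x ∈ A
        · rcases hc with ⟨x, hxc, hxA⟩
          have hsubA : cyl n (extb n s) ⊆ A := by
            intro y hy
            refine hdet x y (fun i hi => ?_) hxA
            rw [hxc i hi, hy i hi]
          have e1 : cyl n (extb n s) ∩ (A ∩ I) = I ∩ cyl n (extb n s) := by
            ext y
            constructor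
            · rintro ⟨h1, -, h3⟩; exact ⟨h3, h1⟩
            · rintro ⟨h1, h2⟩; exact ⟨h2, hsubA h2, h1⟩
          have e2 : cyl n (extb n s) ∩ A = cyl n (extb n s) :=
            Set.inter_eq_left.mpr hsubA
          rw [e1, e2]
          exact lemA n (extb n s)
        · have e : cyl n (extb n s) ∩ (A ∩ I) = ∅ := by
            rw [Set.eq_empty_iff_forall_notMem]
            rintro x ⟨h1, h2, -⟩
            exact hc ⟨x, h1, h2⟩
          rw [e]
          simp
      calc 2 * μ (A ∩ I)
          = 2 * ∑' s : Fin n → Bool, μ (cyl n (extb n s) ∩ (A ∩ I)) := by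
            rw [hsum (A ∩ I) (mA.inter mI)]
        _ = ∑' s : Fin n → Bool, 2 * μ (cyl n (extb n s) ∩ (A ∩ I)) := by
            rw [ENNReal.tsum_mul_left]
        _ ≤ ∑' s : Fin n → Bool, μ (cyl n (extb n s) ∩ A) := ENNReal.tsum_le_tsum hterm
        _ = μ A := (hsum A mA).symm
    -- approximation
    have hdense : μ.MeasureDense finDet :=
      Measure.MeasureDense.of_generateFrom_isSetAlgebra_finite μ isSetAlgebra_finDet
        pi_eq_generateFrom_finDet
    have hbound : ∀ ε : ℝ, 0 < ε → μ I ≤ 3 * ENNReal.ofReal ε := by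
      intro ε hε
      rcases hdense.approx I mI (measure_ne_top μ I) ε hε with ⟨A, hA, hAI⟩
      have mA : MeasurableSet A := hA.1
      have h1 : μ I ≤ μ (A ∩ I) + μ (I \ A) := by
        refine le_trans (measure_mono ?_) (measure_union_le _ _)
        intro x hx
        by_cases hxA : x ∈ A
        · exact Or.inl ⟨hxA, hx⟩
        · exact Or.inr ⟨hx, hxA⟩
      have h2 : μ A ≤ μ I + μ (A \ I) := by
        refine le_trans (measure_mono ?_) (measure_union_le _ _)
        intro x hx
        by_cases hxI : x ∈ I
        · exact Or.inl hxI
        · exact Or.inr ⟨hx, hxI⟩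
      have hd1 : μ (I \ A) ≤ μ (I ∆ A) :=
        measure_mono fun x hx => Set.mem_symmDiff.mpr (Or.inl ⟨hx.1, hx.2⟩)
      have hd2 : μ (A \ I) ≤ μ (I ∆ A) :=
        measure_mono fun x hx => Set.mem_symmDiff.mpr (Or.inr ⟨hx.1, hx.2⟩)
      have key : μ I + μ I ≤ μ I + 3 * ENNReal.ofReal ε := by
        calc μ I + μ I ≤ (μ (A ∩ I) + μ (I \ A)) + (μ (A ∩ I) + μ (I \ A)) :=
              add_le_add h1 h1
          _ = 2 * μ (A ∩ I) + 2 * μ (I \ A) := by ring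
          _ ≤ μ A + 2 * μ (I ∆ A) :=
              add_le_add (lemB A hA) (mul_le_mul_right hd1 2)
          _ ≤ (μ I + μ (I ∆ A)) + 2 * μ (I ∆ A) :=
              add_le_add_left (h2.trans (add_le_add_right hd2 (μ I))) _
          _ = μ I + 3 * μ (I ∆ A) := by ring
          _ ≤ μ I + 3 * ENNReal.ofReal ε :=
              add_le_add_right (mul_le_mul_right hAI.le 3) _
      exact (ENNReal.add_le_add_iff_left (measure_ne_top μ I)).mp key
    by_contra h0
    have hpos : 0 < (μ I).toReal :=
      ENNReal.toReal_pos h0 (measure_ne_top μ I)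
    have := hbound ((μ I).toReal / 6) (by positivity)
    have heq : (3 : ENNReal) * ENNReal.ofReal ((μ I).toReal / 6)
        = ENNReal.ofReal ((μ I).toReal / 2) := by
      have h3 : (3 : ENNReal) = ENNReal.ofReal 3 := by simp
      rw [h3, ← ENNReal.ofReal_mul (by norm_num)]
      congr 1
      ring
    rw [heq] at this
    have hlt : ENNReal.ofReal ((μ I).toReal / 2) < μ I := by
      conv_rhs => rw [← ENNReal.ofReal_toReal (measure_ne_top μ I)]
      exact (ENNReal.ofReal_lt_ofReal_iff hpos).mpr (by linarith)
    exact absurd this (not_le.mpr hlt)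
  refine ⟨main, ?_⟩
  rintro ⟨f, hf, hunion⟩
  have h0 : μ (⋃ n, f n) = 0 :=
    measure_iUnion_null fun n => main (f n) (hf n).1 (hf n).2
  rw [hunion] at h0
  simp [measure_univ] at h0
end

section
/- Every ℍ-independent subset of {0,1}^ℕ with the Baire property is meager; consequently {0,1}^ℕ cannot be partitioned into countably many Baire-measurable ℍ-independent sets, so the Baire-measurable chromatic number of ℍ is uncountable. -/
/-- Flipping the `n`-th coordinate. -/
def flipMap (n : ℕ) (x : ℕ → Bool) : ℕ → Bool := Function.update x n (!x n)

lemma flipMap_involutive (n : ℕ) : Function.Involutive (flipMap n) := by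
  intro x
  funext i
  by_cases h : i = n <;> simp [flipMap, Function.update_apply, h]

lemma continuous_flipMap (n : ℕ) : Continuous (flipMap n) := by
  apply continuous_pi
  intro i
  by_cases h : i = n
  · subst h
    simp only [flipMap, Function.update_self]
    exact (continuous_of_discreteTopology (f := Bool.not)).comp (continuous_apply _)
  · simp only [flipMap, Function.update_apply, if_neg h]
    exact continuous_apply i

/-- The flip map as a homeomorphism. -/
def flipHomeo (n : ℕ) : Homeomorph (ℕ → Bool) (ℕ → Bool) where
  toEquiv := (flipMap_involutive n).toPerm
  continuous_toFun := continuous_flipMap n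
  continuous_invFun := continuous_flipMap n

lemma not_isMeagre_of_isOpen' {s : Set (ℕ → Bool)} (ho : IsOpen s) (hne : s.Nonempty) :
    ¬ IsMeagre s := by
  intro hm
  have hd : Dense sᶜ := dense_of_mem_residual hm
  have : sᶜ = Set.univ := ho.isClosed_compl.closure_eq ▸ hd.closure_eq
  obtain ⟨x, hx⟩ := hne
  have : x ∈ sᶜ := this ▸ Set.mem_univ x
  exact this hx

/-- Every hypercube-independent set with the Baire property is meager; consequently `{0,1}^ℕ`
cannot be partitioned into countably many Baire-measurable independent sets (so the
Baire-measurable chromatic number of the hypercube is uncountable). -/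
theorem hypercube_baire_independent_meager :
    (∀ I : Set (ℕ → Bool), BaireMeasurableSet I → HIndependent I → IsMeagre I) ∧
      ¬ ∃ f : ℕ → Set (ℕ → Bool),
          (∀ n, BaireMeasurableSet (f n) ∧ HIndependent (f n)) ∧ (⋃ n, f n) = Set.univ := by
  have key : ∀ I : Set (ℕ → Bool), BaireMeasurableSet I → HIndependent I → IsMeagre I := by
    intro I hBM hInd
    by_contra hM
    obtain ⟨U, hUo, hIU⟩ := hBM.residualEq_isOpen
    rw [Filter.eventuallyEq_set] at hIU
    -- U \ I and I \ U are meager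
    have hUI : IsMeagre (U \ I) := by
      refine Filter.mem_of_superset hIU ?_
      intro z hz hzd
      exact hzd.2 (hz.mpr hzd.1)
    have hIUm : IsMeagre (I \ U) := by
      refine Filter.mem_of_superset hIU ?_
      intro z hz hzd
      exact hzd.2 (hz.mp hzd.1)
    -- U is nonempty
    have hUne : U.Nonempty := by
      rcases Set.eq_empty_or_nonempty U with h | h
      · exact absurd (hIUm.mono (by simp [h])) hM
      · exact h
    obtain ⟨x, hx⟩ := hUne
    obtain ⟨F, u, hu, hpi⟩ := isOpen_pi_iff.mp hUo x hx
    -- the basic cylinder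
    set C : Set (ℕ → Bool) := {y | ∀ i ∈ F, y i = x i} with hC
    have hCU : C ⊆ U := by
      intro y hy
      apply hpi
      intro i hi
      rw [hy i hi]
      exact (hu i hi).2
    have hxC : x ∈ C := fun i _ => rfl
    have hCo : IsOpen C := by
      have : C = ⋂ i ∈ F, (fun y : ℕ → Bool => y i) ⁻¹' {x i} := by
        ext y; simp [hC]
      rw [this]
      exact isOpen_biInter_finset fun i _ => (isOpen_discrete _).preimage (continuous_apply i)
    -- pick a coordinate outside F
    obtain ⟨n, hn⟩ := Finset.exists_notMem F
    -- the flip map preserves C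
    have hfC : flipMap n ⁻¹' C = C := by
      ext y
      simp only [Set.mem_preimage, hC, Set.mem_setOf_eq]
      constructor <;> intro h i hi <;>
        have hin : i ≠ n := fun he => hn (he ▸ hi)
      · have := h i hi
        rwa [flipMap, Function.update_apply, if_neg hin] at this
      · rw [flipMap, Function.update_apply, if_neg hin]
        exact h i hi
    have hCI : IsMeagre (C \ I) := hUI.mono (fun z (hz : z ∈ C \ I) => (⟨hCU hz.1, hz.2⟩ : z ∈ U \ I))
    have hCfI : IsMeagre (C \ flipMap n ⁻¹' I) := by
      have := hCI.preimage_of_isOpenMap (continuous_flipMap n) (flipHomeo n).isOpenMap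
      have heq : flipMap n ⁻¹' (C \ I) = C \ flipMap n ⁻¹' I := by
        rw [Set.preimage_diff, hfC]
      rwa [heq] at this
    -- C is nonmeager, so there is a point in C ∩ I ∩ flipMap n ⁻¹' I
    have hCm : ¬ IsMeagre C := not_isMeagre_of_isOpen' hCo ⟨x, hxC⟩
    have : ∃ y, y ∈ C ∧ y ∈ I ∧ flipMap n y ∈ I := by
      by_contra h
      push_neg at h
      apply hCm
      have : C ⊆ (C \ I) ∪ (C \ flipMap n ⁻¹' I) := by
        intro y hy
        by_cases hyI : y ∈ I
        · exact Or.inr ⟨hy, fun hfy => h y hy hyI hfy⟩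
        · exact Or.inl ⟨hy, hyI⟩
      have hun : IsMeagre ((C \ I) ∪ (C \ flipMap n ⁻¹' I)) := by
        rw [IsMeagre, Set.compl_union]
        exact Filter.inter_mem hCI hCfI
      exact hun.mono this
    obtain ⟨y, -, hyI, hfyI⟩ := this
    refine hInd y hyI (flipMap n y) hfyI ⟨n, ?_, ?_⟩
    · simp [flipMap]
    · intro m hm
      by_contra hmn
      apply hm
      rw [flipMap, Function.update_apply, if_neg hmn]
  refine ⟨key, ?_⟩
  rintro ⟨f, hf, hcov⟩
  have : IsMeagre (⋃ n, f n) := isMeagre_iUnion fun n => key (f n) (hf n).1 (hf n).2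
  rw [hcov] at this
  exact not_isMeagre_of_isOpen' isOpen_univ ⟨fun _ => false, trivial⟩ this
end
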